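/- Fix integers n ≥ 2 and 1 ≤ k ≤ n−1, let ζ = e^{2πi/n}, and let W be the Laurent polynomial in the variables x_{i,j} (1 ≤ i ≤ k, 1 ≤ j ≤ n−k) given by W(x) = Σ_{i=1}^{k−1} Σ_{j=1}^{n−k} x_{i,j}/x_{i+1,j} + Σ_{i=1}^{k} Σ_{j=1}^{n−k−1} x_{i,j+1}/x_{i,j} + 1/x_{1,n−k} + x_{k,1}. Define ρ : (ℂ^×)^{k(n−k)} → (ℂ^×)^{k(n−k)} by (ρ(x))_{i,j} = ζ^{k−i+j}·x_{i,j}. Then W(ρ(x)) = ζ·W(x) for every x ∈ (ℂ^×)^{k(n−k)}. -/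
import Mathlib


/-- The Maslov 2 disk potential of the monotone Gelfand–Cetlin torus in `Gr(k,n)`
(`m = n−k`), as a function of the holonomy coordinates `x (i,j)`, `1 ≤ i ≤ k`,
`1 ≤ j ≤ m`. -/
noncomputable def gcPotential (k m : ℕ) (x : ℕ × ℕ → ℂ) : ℂ :=
  (∑ i ∈ Finset.Icc 1 (k - 1), ∑ j ∈ Finset.Icc 1 m, x (i, j) / x (i + 1, j))
    + (∑ i ∈ Finset.Icc 1 k, ∑ j ∈ Finset.Icc 1 (m - 1), x (i, j + 1) / x (i, j))
    + 1 / x (1, m) + x (k, 1)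

/-- The rotation `ρ` on the space of local systems: `(ρ(x))_{i,j} = ζ^{k−i+j}·x_{i,j}`
with `ζ = e^{2πi/n}`. -/
noncomputable def gcRho (n k : ℕ) (x : ℕ × ℕ → ℂ) : ℕ × ℕ → ℂ := fun q =>
  Complex.exp (2 * Real.pi * Complex.I / n) ^ (k - q.1 + q.2) * x q

/-- The disk potential of the Gelfand–Cetlin torus is equivariant for the rotation
`ρ`: `W(ρ(x)) = ζ·W(x)` for every `x ∈ (ℂ^×)^{k(n−k)}`. -/
theorem gcPotential_rho_equivariant (n k : ℕ) (hn : 2 ≤ n) (hk1 : 1 ≤ k)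
    (hk2 : k ≤ n - 1) (x : ℕ × ℕ → ℂ)
    (hx : ∀ i j : ℕ, 1 ≤ i → i ≤ k → 1 ≤ j → j ≤ n - k → x (i, j) ≠ 0) :
    gcPotential k (n - k) (gcRho n k x) =
      Complex.exp (2 * Real.pi * Complex.I / n) * gcPotential k (n - k) x := by
  have hnc : (n : ℂ) ≠ 0 := Nat.cast_ne_zero.mpr (by omega)
  set ζ : ℂ := Complex.exp (2 * Real.pi * Complex.I / n) with hζdef
  have hζ : ζ ≠ 0 := Complex.exp_ne_zero _
  have hζn : ζ ^ n = 1 := by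
    rw [hζdef, ← Complex.exp_nat_mul]
    have : (n : ℂ) * (2 * Real.pi * Complex.I / n) = 2 * Real.pi * Complex.I := by
      field_simp
    rw [this, Complex.exp_two_pi_mul_I]
  have key : ∀ (e : ℕ) (a b : ℂ), (ζ ^ (e + 1) * a) / (ζ ^ e * b) = ζ * (a / b) := by
    intro e a b
    rw [pow_succ, mul_assoc, mul_div_mul_left _ _ (pow_ne_zero e hζ), mul_div_assoc]
  simp only [gcPotential, gcRho]
  simp only [← hζdef]
  rw [mul_add, mul_add, mul_add]
  congr 1
  congr 1
  congr 1
  · rw [Finset.mul_sum]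
    apply Finset.sum_congr rfl; intro i hi
    rw [Finset.mul_sum]
    apply Finset.sum_congr rfl; intro j hj
    simp only [Finset.mem_Icc] at hi hj
    have h : k - i + j = (k - (i + 1) + j) + 1 := by omega
    rw [h, key]
  · rw [Finset.mul_sum]
    apply Finset.sum_congr rfl; intro i hi
    rw [Finset.mul_sum]
    apply Finset.sum_congr rfl; intro j hj
    have h : k - i + (j + 1) = (k - i + j) + 1 := by omega
    rw [h, key]
  · have he : k - 1 + (n - k) = n - 1 := by omega
    rw [he]
    have h1 : ζ ^ (n - 1) * ζ = 1 := by
      rw [← pow_succ]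
      have : n - 1 + 1 = n := by omega
      rw [this, hζn]
    calc 1 / (ζ ^ (n - 1) * x (1, n - k))
        = (ζ * 1) / (ζ * (ζ ^ (n - 1) * x (1, n - k))) := (mul_div_mul_left _ _ hζ).symm
      _ = ζ / ((ζ ^ (n - 1) * ζ) * x (1, n - k)) := by ring
      _ = ζ * (1 / x (1, n - k)) := by rw [h1, one_mul, mul_one_div]
  · have h : k - k + 1 = 1 := by omega
    rw [h, pow_one]
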